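/- (Proposition 1) Let η > 0 and ρ² > 0. If a random variable A satisfies A | a² = s ∼ N(0, ρ² s) and a² has the GIG(1, η, η) density proportional to exp(−(η/2)(s + 1/s)) on (0, ∞), then A has the hyperbolic density with shape η and scale ρ². Equivalently, for every x ∈ ℝ, ∫₀^∞ (2π ρ² s)^(−1/2) exp(−x²/(2 ρ² s)) · (2 K₁(η))^(−1) exp(−(η/2)(s + 1/s)) ds = (2 √(η ρ²) K₁(η))^(−1) exp(−√(η (η + x²/ρ²))). -/

import Mathlib

open MeasureTheory Real

/-- The modified Bessel function of the second kind of order `ν`, for `z > 0`. -/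
noncomputable def besselK (ν z : ℝ) : ℝ :=
  ∫ t in Set.Ioi (0 : ℝ), Real.exp (-z * Real.cosh t) * Real.cosh (ν * t)

open Set

lemma image_sub_div (c : ℝ) (hc : 0 < c) :
    (fun t : ℝ => t - c / t) '' Ioi 0 = univ := by
  apply eq_univ_of_forall
  intro y
  have hr : 0 ≤ y^2 + 4*c := by positivity
  set r := Real.sqrt (y^2 + 4*c) with hrdef
  have hr2 : r^2 = y^2 + 4*c := Real.sq_sqrt hr
  have hry : |y| < r := by
    have : |y| = Real.sqrt (y^2) := (Real.sqrt_sq_eq_abs y).symm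
    rw [this]
    exact Real.sqrt_lt_sqrt (by positivity) (by linarith)
  have hyr : 0 < y + r := by
    have := abs_le.mp hry.le
    nlinarith [hry]
  have ht : 0 < (y + r)/2 := by linarith
  refine ⟨(y + r)/2, ht, ?_⟩
  have hne : y + r ≠ 0 := ne_of_gt hyr
  field_simp
  ring_nf
  nlinarith [hr2]

lemma derivWithin_f (c : ℝ) : ∀ t ∈ Ioi (0:ℝ),
    HasDerivWithinAt (fun t : ℝ => t - c / t) (1 + c / t^2) (Ioi 0) t := by
  intro t ht
  have ht' : t ≠ 0 := ne_of_gt ht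
  have h1 : HasDerivAt (fun t : ℝ => t - c / t) (1 - c * (-(t^2)⁻¹)) t := by
    simpa [div_eq_mul_inv, mul_comm, Pi.sub_def] using
      (hasDerivAt_id' t).sub ((hasDerivAt_inv ht').const_mul c)
  have : 1 - c * (-(t^2)⁻¹) = 1 + c / t^2 := by field_simp; ring
  exact (this ▸ h1).hasDerivWithinAt

lemma injOn_f (c : ℝ) (hc : 0 < c) : InjOn (fun t : ℝ => t - c / t) (Ioi 0) := by
  have : StrictMonoOn (fun t : ℝ => t - c / t) (Ioi 0) := by
    intro a ha b hb hlt
    have : c / b < c / a := div_lt_div_of_pos_left hc (mem_Ioi.mp ha) hlt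
    simp only
    linarith
  exact this.injOn

lemma gauss_total (c : ℝ) (hc : 0 < c) :
    ∫ t in Ioi (0:ℝ), (1 + c/t^2) * Real.exp (-(t - c/t)^2) = Real.sqrt π := by
  have h := integral_image_eq_integral_abs_deriv_smul (f := fun t : ℝ => t - c / t)
    (f' := fun t : ℝ => 1 + c / t^2) measurableSet_Ioi (derivWithin_f c) (injOn_f c hc)
    (fun u => Real.exp (-u^2))
  rw [image_sub_div c hc] at h
  have hL : ∫ x in (univ : Set ℝ), Real.exp (-x^2) = Real.sqrt π := by
    rw [Measure.restrict_univ]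
    simpa using integral_gaussian 1
  rw [hL] at h
  rw [h]
  apply setIntegral_congr_fun measurableSet_Ioi
  intro t ht
  have ht' : (0:ℝ) < t := ht
  have : |1 + c/t^2| = 1 + c/t^2 := abs_of_pos (by positivity)
  simp [this, smul_eq_mul]

lemma deriv_g (c : ℝ) (hc : 0 < c) : ∀ t ∈ Ioi (0:ℝ),
    HasDerivWithinAt (fun t : ℝ => c / t) (-(c / t^2)) (Ioi 0) t := by
  intro t ht
  have ht' : t ≠ 0 := ne_of_gt ht
  have h1 : HasDerivAt (fun t : ℝ => c / t) (c * (-(t^2)⁻¹)) t := by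
    simpa [div_eq_mul_inv] using (hasDerivAt_inv ht').const_mul c
  have : c * (-(t^2)⁻¹) = -(c / t^2) := by field_simp
  exact (this ▸ h1).hasDerivWithinAt

lemma image_g (c : ℝ) (hc : 0 < c) : (fun t : ℝ => c / t) '' Ioi 0 = Ioi 0 := by
  ext y
  constructor
  · rintro ⟨t, ht, rfl⟩
    exact div_pos hc ht
  · intro hy
    exact ⟨c / y, div_pos hc hy, by field_simp⟩

lemma injOn_g (c : ℝ) (hc : 0 < c) : InjOn (fun t : ℝ => c / t) (Ioi 0) := by
  intro a ha b hb h
  simp only at h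
  rw [div_eq_div_iff (ne_of_gt (mem_Ioi.mp ha)) (ne_of_gt (mem_Ioi.mp hb))] at h
  exact (mul_left_cancel₀ (ne_of_gt hc) h).symm

lemma A_eq_B (c : ℝ) (hc : 0 < c) :
    ∫ t in Ioi (0:ℝ), Real.exp (-(t - c/t)^2)
      = ∫ t in Ioi (0:ℝ), (c/t^2) * Real.exp (-(t - c/t)^2) := by
  have h := integral_image_eq_integral_abs_deriv_smul (f := fun t : ℝ => c / t)
    (f' := fun t : ℝ => -(c / t^2)) measurableSet_Ioi (deriv_g c hc) (injOn_g c hc)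
    (fun u => Real.exp (-(u - c/u)^2))
  rw [image_g c hc] at h
  rw [h]
  apply setIntegral_congr_fun measurableSet_Ioi
  intro t ht
  have ht' : (0:ℝ) < t := ht
  have habs : |(-(c / t^2))| = c / t^2 := by rw [abs_neg]; exact abs_of_pos (by positivity)
  have hcc : c / t - c / (c / t) = -(t - c/t) := by field_simp; ring
  simp only [smul_eq_mul]
  rw [habs, hcc, neg_sq]

lemma Aintegrable (c : ℝ) (hc : 0 < c) :
    IntegrableOn (fun t : ℝ => Real.exp (-(t - c/t)^2)) (Ioi 0) := by
  have hbound : ∀ t ∈ Ioi (0:ℝ),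
      ‖Real.exp (-(t - c/t)^2)‖ ≤ Real.exp (2*c) * Real.exp (-t^2) := by
    intro t ht
    have ht' : (0:ℝ) < t := ht
    rw [Real.norm_eq_abs, abs_of_pos (Real.exp_pos _), ← Real.exp_add]
    apply Real.exp_le_exp.mpr
    have h1 : (t - c/t)^2 = t^2 - 2*c + (c/t)^2 := by field_simp; ring
    nlinarith [sq_nonneg (c/t)]
  apply Integrable.mono' ((integrable_exp_neg_mul_sq one_pos).const_mul
    (Real.exp (2*c))).restrict
  · have hcont : ContinuousOn (fun t : ℝ => Real.exp (-(t - c/t)^2)) (Ioi 0) :=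
      Real.continuous_exp.comp_continuousOn
        (((continuousOn_id.sub (continuousOn_const.div continuousOn_id
          fun x hx => ne_of_gt hx)).pow 2).neg)
    exact hcont.aestronglyMeasurable measurableSet_Ioi
  · exact (ae_restrict_iff' measurableSet_Ioi).mpr (Filter.Eventually.of_forall
      (by intro t; intro ht; simpa using hbound t ht))

lemma Bintegrable (c : ℝ) (hc : 0 < c) :
    IntegrableOn (fun t : ℝ => (c/t^2) * Real.exp (-(t - c/t)^2)) (Ioi 0) := by
  have h := (integrableOn_image_iff_integrableOn_abs_deriv_smul (f := fun t : ℝ => c / t)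
    (f' := fun t : ℝ => -(c / t^2)) measurableSet_Ioi (deriv_g c hc) (injOn_g c hc)
    (fun u => Real.exp (-(u - c/u)^2)))
  rw [image_g c hc] at h
  have h2 := h.mp (Aintegrable c hc)
  apply h2.congr_fun _ measurableSet_Ioi
  intro t ht
  have ht' : (0:ℝ) < t := ht
  have habs : |(-(c / t^2))| = c / t^2 := by rw [abs_neg]; exact abs_of_pos (by positivity)
  have hcc : c / t - c / (c / t) = -(t - c/t) := by field_simp; ring
  simp only [smul_eq_mul, habs, hcc, neg_sq]

lemma A_val (c : ℝ) (hc : 0 < c) :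
    ∫ t in Ioi (0:ℝ), Real.exp (-(t - c/t)^2) = Real.sqrt π / 2 := by
  have hsplit : ∫ t in Ioi (0:ℝ), (1 + c/t^2) * Real.exp (-(t - c/t)^2)
      = (∫ t in Ioi (0:ℝ), Real.exp (-(t - c/t)^2))
        + ∫ t in Ioi (0:ℝ), (c/t^2) * Real.exp (-(t - c/t)^2) := by
    rw [← integral_add (Aintegrable c hc) (Bintegrable c hc)]
    apply setIntegral_congr_fun measurableSet_Ioi
    intro t ht
    ring
  have h := gauss_total c hc
  rw [hsplit, ← A_eq_B c hc] at h
  linarith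

lemma glasser (c : ℝ) (hc : 0 < c) :
    ∫ u in Ioi (0:ℝ), Real.exp (-u^2 - c^2/u^2)
      = Real.sqrt π / 2 * Real.exp (-(2*c)) := by
  have : ∀ u ∈ Ioi (0:ℝ), Real.exp (-u^2 - c^2/u^2)
      = Real.exp (-(u - c/u)^2) * Real.exp (-(2*c)) := by
    intro u hu
    have hu' : u ≠ 0 := ne_of_gt (mem_Ioi.mp hu)
    rw [← Real.exp_add]
    congr 1
    field_simp
    ring
  rw [setIntegral_congr_fun measurableSet_Ioi this, integral_mul_const, A_val c hc]

lemma besselhalf (a b : ℝ) (ha : 0 < a) (hb : 0 < b) :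
    ∫ t in Ioi (0:ℝ), Real.exp (-(a*t^2 + b/t^2)/2)
      = Real.sqrt (2*π/a) / 2 * Real.exp (-Real.sqrt (a*b)) := by
  set m : ℝ := Real.sqrt (a/2) with hm
  have hm0 : 0 < m := Real.sqrt_pos.mpr (by linarith)
  set c : ℝ := Real.sqrt (a*b) / 2 with hc
  have hc0 : 0 < c := by
    have : 0 < Real.sqrt (a*b) := Real.sqrt_pos.mpr (by positivity)
    positivity
  have key : ∀ t : ℝ, 0 < t → Real.exp (-(a*t^2 + b/t^2)/2)
      = Real.exp (-(m*t)^2 - c^2/(m*t)^2) := by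
    intro t ht
    congr 1
    have hm2 : m^2 = a/2 := Real.sq_sqrt (by linarith : (0:ℝ) ≤ a/2)
    have hc2 : c^2 = a*b/4 := by
      rw [hc, div_pow, Real.sq_sqrt (by positivity : (0:ℝ) ≤ a*b)]
      norm_num
    rw [mul_pow, hm2, hc2]
    have ht' : t ≠ 0 := ne_of_gt ht
    have ha' : a ≠ 0 := ne_of_gt ha
    field_simp
    ring
  have step1 : ∫ t in Ioi (0:ℝ), Real.exp (-(a*t^2 + b/t^2)/2)
      = ∫ t in Ioi (0:ℝ), Real.exp (-(m*t)^2 - c^2/(m*t)^2) :=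
    setIntegral_congr_fun measurableSet_Ioi fun t ht => key t ht
  have step2 : ∫ t in Ioi (0:ℝ), Real.exp (-(m*t)^2 - c^2/(m*t)^2)
      = m⁻¹ • ∫ u in Ioi (0:ℝ), Real.exp (-u^2 - c^2/u^2) := by
    have := integral_comp_mul_left_Ioi (fun u => Real.exp (-u^2 - c^2/u^2)) 0 hm0
    rw [mul_zero] at this
    exact this
  rw [step1, step2, glasser c hc0]
  have h2c : 2*c = Real.sqrt (a*b) := by rw [hc]; ring
  rw [h2c, smul_eq_mul]
  have hminv : m⁻¹ = Real.sqrt (2/a) := by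
    rw [hm, ← Real.sqrt_inv]
    congr 1
    rw [inv_div]
  rw [hminv]
  rw [show Real.sqrt (2/a) * (Real.sqrt π / 2 * Real.exp (-Real.sqrt (a*b)))
      = (Real.sqrt (2/a) * Real.sqrt π) / 2 * Real.exp (-Real.sqrt (a*b)) by ring,
    ← Real.sqrt_mul (by positivity) π]
  congr 3
  ring

lemma sq_sub (a b : ℝ) (ha : 0 < a) (hb : 0 < b) :
    ∫ s in Ioi (0:ℝ), (Real.sqrt s)⁻¹ * Real.exp (-(a*s + b/s)/2)
      = 2 * ∫ t in Ioi (0:ℝ), Real.exp (-(a*t^2 + b/t^2)/2) := by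
  have himg : (fun t : ℝ => t^2) '' Ioi 0 = Ioi 0 := by
    ext y
    constructor
    · rintro ⟨t, ht, rfl⟩
      exact pow_pos (mem_Ioi.mp ht) 2
    · intro hy
      exact ⟨Real.sqrt y, Real.sqrt_pos.mpr hy, Real.sq_sqrt (le_of_lt hy)⟩
  have hderiv : ∀ t ∈ Ioi (0:ℝ), HasDerivWithinAt (fun t : ℝ => t^2) (2*t) (Ioi 0) t := by
    intro t ht
    simpa [mul_comm] using (hasDerivAt_pow 2 t).hasDerivWithinAt
  have hinj : InjOn (fun t : ℝ => t^2) (Ioi 0) := by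
    intro s hs t ht h
    simp only at h
    have h2 : (s - t) * (s + t) = 0 := by linear_combination h
    rcases mul_eq_zero.mp h2 with h3 | h3
    · linarith
    · have : (0:ℝ) < s + t := by
        have := mem_Ioi.mp hs; have := mem_Ioi.mp ht; linarith
      linarith
  have h := integral_image_eq_integral_abs_deriv_smul (f := fun t : ℝ => t^2)
    (f' := fun t : ℝ => 2*t) measurableSet_Ioi hderiv hinj
    (fun s => (Real.sqrt s)⁻¹ * Real.exp (-(a*s + b/s)/2))
  rw [himg] at h
  rw [h, ← integral_const_mul]
  apply setIntegral_congr_fun measurableSet_Ioi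
  intro t ht
  have ht' : (0:ℝ) < t := ht
  have hs : Real.sqrt (t^2) = t := Real.sqrt_sq (le_of_lt ht')
  simp only [smul_eq_mul]
  rw [abs_of_pos (by linarith : (0:ℝ) < 2*t), hs]
  field_simp

lemma core_integral (a b : ℝ) (ha : 0 < a) (hb : 0 < b) :
    ∫ s in Ioi (0:ℝ), (Real.sqrt s)⁻¹ * Real.exp (-(a*s + b/s)/2)
      = Real.sqrt (2*π/a) * Real.exp (-Real.sqrt (a*b)) := by
  rw [sq_sub a b ha hb, besselhalf a b ha hb]
  ring

/-- Proposition 1: if `A | a² = s ∼ N(0, ρ² s)` and `a² ∼ GIG(1, η, η)`, then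
`A` has the hyperbolic density with shape `η` and scale `ρ²`. -/
theorem normal_gig_mixture_is_hyperbolic (η ρ2 x : ℝ) (hη : 0 < η) (hρ : 0 < ρ2) :
    ∫ s in Set.Ioi (0 : ℝ),
        (2 * π * ρ2 * s) ^ (-(1 : ℝ) / 2) * Real.exp (-x ^ 2 / (2 * ρ2 * s))
          * (2 * besselK 1 η)⁻¹ * Real.exp (-(η / 2) * (s + 1 / s))
      = (2 * Real.sqrt (η * ρ2) * besselK 1 η)⁻¹
          * Real.exp (-Real.sqrt (η * (η + x ^ 2 / ρ2))) := by
  have hπ : (0:ℝ) < π := Real.pi_pos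
  set b : ℝ := η + x^2/ρ2 with hbdef
  have hb : 0 < b := by positivity
  set K : ℝ := besselK 1 η with hK
  have hcongr : ∀ s ∈ Ioi (0:ℝ),
      (2 * π * ρ2 * s) ^ (-(1 : ℝ) / 2) * Real.exp (-x ^ 2 / (2 * ρ2 * s))
          * (2 * K)⁻¹ * Real.exp (-(η / 2) * (s + 1 / s))
        = ((2*K)⁻¹ * (Real.sqrt (2*π*ρ2))⁻¹)
            * ((Real.sqrt s)⁻¹ * Real.exp (-(η*s + b/s)/2)) := by
    intro s hs
    have hs' : (0:ℝ) < s := hs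
    have h1 : (2 * π * ρ2 * s) ^ (-(1 : ℝ) / 2)
        = (Real.sqrt (2*π*ρ2))⁻¹ * (Real.sqrt s)⁻¹ := by
      rw [show (-(1:ℝ)/2) = -(1/2) by norm_num, Real.rpow_neg (by positivity),
        ← Real.sqrt_eq_rpow, Real.sqrt_mul (by positivity), mul_inv]
    have h2 : Real.exp (-x ^ 2 / (2 * ρ2 * s)) * Real.exp (-(η / 2) * (s + 1 / s))
        = Real.exp (-(η*s + b/s)/2) := by
      rw [← Real.exp_add]
      congr 1
      rw [hbdef]
      field_simp
      ring
    calc (2 * π * ρ2 * s) ^ (-(1 : ℝ) / 2) * Real.exp (-x ^ 2 / (2 * ρ2 * s))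
          * (2 * K)⁻¹ * Real.exp (-(η / 2) * (s + 1 / s))
        = (2 * π * ρ2 * s) ^ (-(1 : ℝ) / 2) * (2 * K)⁻¹
            * (Real.exp (-x ^ 2 / (2 * ρ2 * s)) * Real.exp (-(η / 2) * (s + 1 / s))) := by
          ring
      _ = _ := by rw [h1, h2]; ring
  rw [setIntegral_congr_fun measurableSet_Ioi hcongr, integral_const_mul,
    core_integral η b hη hb]
  have hab : Real.sqrt (η * b) = Real.sqrt (η * (η + x ^ 2 / ρ2)) := by rw [hbdef]
  rw [hab]
  have hconst : (Real.sqrt (2*π*ρ2))⁻¹ * Real.sqrt (2*π/η) = (Real.sqrt (η*ρ2))⁻¹ := by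
    rw [← Real.sqrt_inv, ← Real.sqrt_inv, ← Real.sqrt_mul (by positivity)]
    congr 1
    field_simp
  calc (2*K)⁻¹ * (Real.sqrt (2*π*ρ2))⁻¹
        * (Real.sqrt (2*π/η) * Real.exp (-Real.sqrt (η * (η + x ^ 2 / ρ2))))
      = (2*K)⁻¹ * ((Real.sqrt (2*π*ρ2))⁻¹ * Real.sqrt (2*π/η))
        * Real.exp (-Real.sqrt (η * (η + x ^ 2 / ρ2))) := by ring
    _ = (2 * Real.sqrt (η * ρ2) * K)⁻¹
        * Real.exp (-Real.sqrt (η * (η + x ^ 2 / ρ2))) := by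
        rw [hconst, mul_inv, mul_inv, mul_inv]
        ring
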